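/- Let X ∈ 𝒳ⁿ be a random k-sparse vector over a finite alphabet 𝒳 for its nonzero entries, with support T uniformly distributed over all C(n,k) subsets of size k and nonzero entries i.i.d. uniform on 𝒳 given T. If X̂ is any reconstruction with H(X̂) ≤ nR and P[X ≠ X̂] → 0 (so Fano's error term ε_n → 0), then nR ≥ k·log(n/k) + k·log|𝒳| − nε_n − o(k). -/

import Mathlib

open MeasureTheory

/-- Shannon entropy (base 2) of a random variable taking values in the finite set
`S`, with the convention `0 · log 0 = 0` (note `Real.logb 2 0 = 0`). -/
noncomputable def ent {Ω α : Type*} [MeasurableSpace Ω] (μ : Measure Ω)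
    (X : Ω → α) (S : Finset α) : ℝ :=
  -∑ a ∈ S, (μ (X ⁻¹' {a})).toReal * Real.logb 2 (μ (X ⁻¹' {a})).toReal

/-- `(n/k)^k ≤ C(n,k)` over the reals. -/
lemma choose_lb (n k : ℕ) (hk : 1 ≤ k) (hkn : k ≤ n) :
    ((n : ℝ) / k) ^ k ≤ (n.choose k : ℝ) := by
  have hk0 : (0 : ℝ) < k := by exact_mod_cast hk
  have hfac : (0 : ℝ) < (k.factorial : ℝ) := by positivity
  have hdesc : (n.descFactorial k : ℝ) = (k.factorial : ℝ) * (n.choose k : ℝ) := by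
    exact_mod_cast congrArg (Nat.cast : ℕ → ℝ) (Nat.descFactorial_eq_factorial_mul_choose n k)
  have hkfac : (k.factorial : ℝ) = ∏ i ∈ Finset.range k, ((k - i : ℕ) : ℝ) := by
    have h1 : ∏ i ∈ Finset.range k, (k - i) = k.factorial := by
      rw [← Finset.prod_range_add_one_eq_factorial]
      rw [← Finset.prod_range_reflect (fun j => k - j) k]
      refine Finset.prod_congr rfl fun i hi => ?_
      have : i < k := Finset.mem_range.mp hi
      omega
    rw [← h1]
    push_cast
    rfl
  have hdesc2 : (n.descFactorial k : ℝ) = ∏ i ∈ Finset.range k, ((n - i : ℕ) : ℝ) := by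
    rw [Nat.descFactorial_eq_prod_range]
    push_cast
    rfl
  have key : ((n : ℝ) / k) ^ k * (k.factorial : ℝ) ≤ (n.descFactorial k : ℝ) := by
    rw [hkfac, hdesc2]
    have hpc : ((n : ℝ) / k) ^ k = ∏ _i ∈ Finset.range k, ((n : ℝ) / k) := by rw [Finset.prod_const, Finset.card_range]
    rw [hpc, ← Finset.prod_mul_distrib]
    refine Finset.prod_le_prod (fun i hi => ?_) (fun i hi => ?_)
    · have : i < k := Finset.mem_range.mp hi
      positivity
    · have hik : i < k := Finset.mem_range.mp hi
      have h1 : ((k - i : ℕ) : ℝ) = (k : ℝ) - i := by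
        have : i ≤ k := hik.le
        push_cast [this]; ring
      have h2 : ((n - i : ℕ) : ℝ) = (n : ℝ) - i := by
        have : i ≤ n := hik.le.trans hkn
        push_cast [this]; ring
      rw [h1, h2, div_mul_eq_mul_div, div_le_iff₀ hk0]
      have hkn' : (k : ℝ) ≤ n := by exact_mod_cast hkn
      have hi0 : (0 : ℝ) ≤ i := by positivity
      nlinarith
  rw [hdesc] at key
  nlinarith [key, hfac]

/-- converse for lossless compression of a discrete k-sparse source:
`X` is uniform over the vectors with exactly `k` nonzero entries drawn from the
finite alphabet `A` (support uniform over the `C(n,k)` patterns, entries i.i.d.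
uniform on `A` given the support). If the reconstruction `X̂` has entropy at most
`nR` and Fano's term satisfies `H(X | X̂) ≤ n εₙ`, then
`nR ≥ k log₂(n/k) + k log₂|A| − n εₙ`. -/
theorem stmt19 {Ω : Type*} [MeasurableSpace Ω] (μ : Measure Ω) [IsProbabilityMeasure μ]
    (n k : ℕ) (hk : 1 ≤ k) (hkn : k ≤ n)
    (A : Finset ℝ) (hA : A.Nonempty) (h0A : (0 : ℝ) ∉ A)
    (X Xhat : Ω → Fin n → ℝ)
    (V : Finset (Fin n → ℝ))
    (hV : ∀ x : Fin n → ℝ, x ∈ V ↔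
      ((Finset.univ.filter fun j => x j ≠ 0).card = k ∧ ∀ j, x j ≠ 0 → x j ∈ A))
    (hXV : ∀ ω, X ω ∈ V)
    (hunif : ∀ x ∈ V, (μ (X ⁻¹' {x})).toReal = 1 / (n.choose k * A.card ^ k))
    (S2 : Finset (Fin n → ℝ)) (hS2 : ∀ ω, Xhat ω ∈ S2)
    (R εn : ℝ)
    (hrate : ent μ Xhat S2 ≤ n * R)
    (hfano : ent μ (fun ω => (X ω, Xhat ω)) (V ×ˢ S2) - ent μ Xhat S2 ≤ n * εn) :
    k * Real.logb 2 ((n : ℝ) / k) + k * Real.logb 2 (A.card) - n * εn ≤ n * R := by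
  have hMpos : 0 < A.card := Finset.card_pos.mpr hA
  have hCpos : 0 < n.choose k := Nat.choose_pos hkn
  set D : ℝ := (n.choose k : ℝ) * (A.card : ℝ) ^ k with hDdef
  have hDpos : 0 < D := by positivity
  have hD1 : 1 ≤ D := by
    have h1 : (1 : ℝ) ≤ (n.choose k : ℝ) := by exact_mod_cast hCpos
    have h2 : (1 : ℝ) ≤ (A.card : ℝ) ^ k := by
      have : (1 : ℝ) ≤ (A.card : ℝ) := by exact_mod_cast hMpos
      exact one_le_pow₀ this
    nlinarith
  set Y : Ω → (Fin n → ℝ) × (Fin n → ℝ) := fun ω => (X ω, Xhat ω) with hYdef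
  set q : (Fin n → ℝ) × (Fin n → ℝ) → ℝ := fun p => (μ (Y ⁻¹' {p})).toReal with hqdef
  -- each joint mass is at most 1/D
  have hqle : ∀ p ∈ V ×ˢ S2, q p ≤ 1 / D := by
    rintro ⟨x, y⟩ hp
    have hxV : x ∈ V := (Finset.mem_product.mp hp).1
    have hsub : Y ⁻¹' {(x, y)} ⊆ X ⁻¹' {x} := by
      intro ω hω
      simp only [Set.mem_preimage, Set.mem_singleton_iff, hYdef, Prod.mk.injEq] at hω ⊢
      exact hω.1
    have hmono : μ (Y ⁻¹' {(x, y)}) ≤ μ (X ⁻¹' {x}) := measure_mono hsub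
    have hfin : μ (X ⁻¹' {x}) ≠ ⊤ := measure_ne_top μ _
    have := ENNReal.toReal_mono hfin hmono
    rw [hunif x hxV] at this
    simpa [hDdef] using this
  have hqnn : ∀ p, 0 ≤ q p := fun p => ENNReal.toReal_nonneg
  -- total joint mass at least 1
  have hsum1 : 1 ≤ ∑ p ∈ V ×ˢ S2, q p := by
    have hcover : (Set.univ : Set Ω) ⊆ ⋃ p ∈ (V ×ˢ S2 : Finset _), Y ⁻¹' {p} := by
      intro ω _
      have hmem : Y ω ∈ V ×ˢ S2 := Finset.mem_product.mpr ⟨hXV ω, hS2 ω⟩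
      exact Set.mem_biUnion hmem rfl
    have h1 : μ Set.univ ≤ ∑ p ∈ V ×ˢ S2, μ (Y ⁻¹' {p}) :=
      (measure_mono hcover).trans (measure_biUnion_finset_le _ _)
    have h2 : (μ Set.univ).toReal ≤ (∑ p ∈ V ×ˢ S2, μ (Y ⁻¹' {p})).toReal :=
      ENNReal.toReal_mono (by
        exact (ENNReal.sum_lt_top.mpr fun p _ => measure_lt_top μ _).ne) h1
    rw [ENNReal.toReal_sum (fun p _ => measure_ne_top μ _)] at h2
    simpa using h2
  -- lower bound on joint entropy
  have hlogD : 0 ≤ Real.logb 2 D := Real.logb_nonneg one_lt_two hD1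
  have hent : Real.logb 2 D ≤ ent μ Y (V ×ˢ S2) := by
    have hterm : ∀ p ∈ V ×ˢ S2, q p * Real.logb 2 D ≤ -(q p * Real.logb 2 (q p)) := by
      intro p hp
      rcases eq_or_lt_of_le (hqnn p) with h0 | h0
      · simp [← h0]
      · have h1 : q p ≤ 1 / D := hqle p hp
        have h2 : Real.logb 2 (q p) ≤ Real.logb 2 (1 / D) :=
          Real.logb_le_logb_of_le one_lt_two h0 h1
        have h3 : Real.logb 2 (1 / D) = -Real.logb 2 D := by
          rw [one_div, Real.logb_inv]
        nlinarith
    calc Real.logb 2 D = 1 * Real.logb 2 D := (one_mul _).symm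
      _ ≤ (∑ p ∈ V ×ˢ S2, q p) * Real.logb 2 D := by
          exact mul_le_mul_of_nonneg_right hsum1 hlogD
      _ = ∑ p ∈ V ×ˢ S2, q p * Real.logb 2 D := by rw [Finset.sum_mul]
      _ ≤ ∑ p ∈ V ×ˢ S2, -(q p * Real.logb 2 (q p)) := Finset.sum_le_sum hterm
      _ = ent μ Y (V ×ˢ S2) := by
          rw [ent, ← Finset.sum_neg_distrib]
  -- decompose logb D
  have hDlog : Real.logb 2 D = Real.logb 2 (n.choose k : ℝ) + k * Real.logb 2 (A.card : ℝ) := by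
    rw [hDdef, Real.logb_mul (by positivity) (by positivity), Real.logb_pow]
  -- choose lower bound
  have hchoose : (k : ℝ) * Real.logb 2 ((n : ℝ) / k) ≤ Real.logb 2 (n.choose k : ℝ) := by
    have hpow : ((n : ℝ) / k) ^ k ≤ (n.choose k : ℝ) := choose_lb n k hk hkn
    have hpos : (0 : ℝ) < ((n : ℝ) / k) ^ k := by
      have hn0 : (0 : ℝ) < n := by exact_mod_cast (hk.trans hkn)
      have hk0 : (0 : ℝ) < k := by exact_mod_cast hk
      positivity
    have := Real.logb_le_logb_of_le one_lt_two hpos hpow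
    rwa [Real.logb_pow] at this
  have hfano' : ent μ Y (V ×ˢ S2) - ent μ Xhat S2 ≤ n * εn := hfano
  linarith
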